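/- For type-C Dunkl operators, the shift formula (∏_{k=1}^r D_k)(D_j x_j - (a/2)∑_{i<j}(σ_{ij} + s_{ij})) = (D_j x_j - (a/2)∑_{i<j}(σ_{ij} + s_{ij}) + 1 - (ι-1)σ_j)(∏_{k=1}^r D_k) holds as operators on polynomials. -/

import Mathlib

open MvPolynomial Finset

noncomputable section

abbrev Pol (r : ℕ) : Type := MvPolynomial (Fin r) ℂ

/-- Multiplication operator by a polynomial. -/
def mulOp {r : ℕ} (p : Pol r) : Module.End ℂ (Pol r) := LinearMap.mulLeft ℂ p

/-- Partial derivative operator. -/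
def pd {r : ℕ} (j : Fin r) : Module.End ℂ (Pol r) := (pderiv j).toLinearMap

/-- The transposition operator `s_{ij}` swapping the variables `i` and `j`. -/
def swOp {r : ℕ} (i j : Fin r) : Module.End ℂ (Pol r) :=
  (rename ⇑(Equiv.swap i j) : Pol r →ₐ[ℂ] Pol r).toLinearMap

/-- The sign change operator `σ_j : x_j ↦ -x_j`. -/
def negOp {r : ℕ} (j : Fin r) : Module.End ℂ (Pol r) :=
  (aeval (fun k : Fin r => if k = j then -(X j) else X k) : Pol r →ₐ[ℂ] Pol r).toLinearMap

/-- The signed transposition operator `σ_{ij} : x_i ↦ -x_j, x_j ↦ -x_i`. -/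
def sswOp {r : ℕ} (i j : Fin r) : Module.End ℂ (Pol r) :=
  (aeval (fun k : Fin r => if k = i then -(X j) else if k = j then -(X i) else X k)
    : Pol r →ₐ[ℂ] Pol r).toLinearMap

/-- Ordered product `f 0 * f 1 * ⋯ * f (r-1)` of operators. -/
def opProd {r : ℕ} (f : Fin r → Module.End ℂ (Pol r)) : Module.End ℂ (Pol r) :=
  ((List.finRange r).map f).prod

/-- The type-C Dunkl operator
`D_j = ∂_j + ((ι-1)/2) x_j⁻¹(1-σ_j) + (a/2) ∑_{i≠j} [(x_j-x_i)⁻¹(1-s_{ij}) + (x_j+x_i)⁻¹(1-σ_{ij})]`,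
with the difference-quotient operators given as data `q0, qs, qσ` pinned down by the
specifications below. -/
def dunklC {r : ℕ} (ι a : ℂ) (q0 : Fin r → Module.End ℂ (Pol r))
    (qs qσ : Fin r → Fin r → Module.End ℂ (Pol r)) (j : Fin r) : Module.End ℂ (Pol r) :=
  pd j + ((ι - 1) / 2) • q0 j + (a / 2) • ∑ i ∈ Finset.univ.erase j, (qs i j + qσ i j)

/-- Specification: `q0 j` is division of `(1 - σ_j) f` by `x_j`. -/
def QuotLong {r : ℕ} (q0 : Fin r → Module.End ℂ (Pol r)) : Prop :=
  ∀ j : Fin r, ∀ f : Pol r, X j * q0 j f = f - negOp j f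

/-- Specification: `qs i j` is division of `(1 - s_{ij}) f` by `x_j - x_i`. -/
def QuotS {r : ℕ} (qs : Fin r → Fin r → Module.End ℂ (Pol r)) : Prop :=
  ∀ i j : Fin r, i ≠ j → ∀ f : Pol r, (X j - X i) * qs i j f = f - swOp i j f

/-- Specification: `qσ i j` is division of `(1 - σ_{ij}) f` by `x_j + x_i`. -/
def QuotSig {r : ℕ} (qσ : Fin r → Fin r → Module.End ℂ (Pol r)) : Prop :=
  ∀ i j : Fin r, i ≠ j → ∀ f : Pol r, (X j + X i) * qσ i j f = f - sswOp i j f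


namespace DunklAux

variable {r : ℕ}

/-- AlgHom version of `negOp`. -/
def negA (j : Fin r) : Pol r →ₐ[ℂ] Pol r :=
  aeval (fun k : Fin r => if k = j then -(X j) else X k)

/-- AlgHom version of `swOp`. -/
def swA (i j : Fin r) : Pol r →ₐ[ℂ] Pol r := rename ⇑(Equiv.swap i j)

/-- AlgHom version of `sswOp`. -/
def sswA (i j : Fin r) : Pol r →ₐ[ℂ] Pol r :=
  aeval (fun k : Fin r => if k = i then -(X j) else if k = j then -(X i) else X k)

lemma negOp_apply (j : Fin r) (f : Pol r) : negOp j f = negA j f := rfl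
lemma swOp_apply (i j : Fin r) (f : Pol r) : swOp i j f = swA i j f := rfl
lemma sswOp_apply (i j : Fin r) (f : Pol r) : sswOp i j f = sswA i j f := rfl

@[simp] lemma negA_X (j k : Fin r) : negA j (X k) = if k = j then -(X j) else X k := by
  simp [negA]

@[simp] lemma swA_X (i j k : Fin r) : swA i j (X k) = X (Equiv.swap i j k) := by
  simp [swA]

@[simp] lemma sswA_X (i j k : Fin r) :
    sswA i j (X k) = if k = i then -(X j) else if k = j then -(X i) else X k := by
  simp [sswA]

/-- Helper to convert an AlgHom-composition identity to an applied identity. -/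
lemma comp_apply_eq {F G H K : Pol r →ₐ[ℂ] Pol r}
    (h : ∀ k, F (G (X k)) = H (K (X k))) (f : Pol r) : F (G f) = H (K f) := by
  have : F.comp G = H.comp K := MvPolynomial.algHom_ext (by simpa using h)
  simpa using DFunLike.congr_fun this f

lemma comp_apply_eq₁ {F G H : Pol r →ₐ[ℂ] Pol r}
    (h : ∀ k, F (G (X k)) = H (X k)) (f : Pol r) : F (G f) = H f := by
  have : F.comp G = H := MvPolynomial.algHom_ext (by simpa using h)
  simpa using DFunLike.congr_fun this f

-- Involutions and commutations among the reflection operators.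
lemma negA_negA (j : Fin r) (f : Pol r) : negA j (negA j f) = f := by
  refine comp_apply_eq₁ (H := AlgHom.id ℂ (Pol r)) (fun k => ?_) f
  by_cases h : k = j <;> simp [h]

lemma neg_comm (i j : Fin r) (f : Pol r) : negA i (negA j f) = negA j (negA i f) := by
  rcases eq_or_ne i j with rfl | hij
  · rfl
  · refine comp_apply_eq (fun k => ?_) f
    by_cases h1 : k = j <;> by_cases h2 : k = i <;> simp_all [Ne.symm hij]

lemma sw_symm (i j : Fin r) (f : Pol r) : swA i j f = swA j i f := by
  rw [swA, swA, Equiv.swap_comm]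

lemma ssw_symm (i j : Fin r) (f : Pol r) : sswA i j f = sswA j i f := by
  have : sswA i j = sswA j i := by
    apply MvPolynomial.algHom_ext
    intro k
    rcases eq_or_ne i j with rfl | hij
    · simp [sswA]
    · by_cases h1 : k = i <;> by_cases h2 : k = j <;> simp_all [sswA, Ne.symm hij]
  rw [this]

lemma sw_invol (i j : Fin r) (f : Pol r) : swA i j (swA i j f) = f := by
  refine comp_apply_eq₁ (H := AlgHom.id ℂ (Pol r)) (fun k => ?_) f
  simp

lemma ssw_invol (i j : Fin r) (hij : i ≠ j) (f : Pol r) : sswA i j (sswA i j f) = f := by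
  refine comp_apply_eq₁ (H := AlgHom.id ℂ (Pol r)) (fun k => ?_) f
  by_cases h1 : k = i <;> by_cases h2 : k = j <;>
    simp [h1, h2, hij, Ne.symm hij]

-- `σ_j` commutes with `s_{ik}`, `σ_{ik}` when `j ∉ {i,k}`.
lemma neg_sw_comm {i k j : Fin r} (hji : j ≠ i) (hjk : j ≠ k) (f : Pol r) :
    negA j (swA i k f) = swA i k (negA j f) := by
  refine comp_apply_eq (fun m => ?_) f
  rcases Equiv.swap_apply_def i k m with _
  by_cases h1 : m = i <;> by_cases h2 : m = k <;>
    simp [Equiv.swap_apply_def, h1, h2, hji.symm, hjk.symm, Ne.symm hji, Ne.symm hjk] <;>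
    split_ifs <;> simp_all

lemma neg_ssw_comm {i k j : Fin r} (hji : j ≠ i) (hjk : j ≠ k) (f : Pol r) :
    negA j (sswA i k f) = sswA i k (negA j f) := by
  refine comp_apply_eq (fun m => ?_) f
  by_cases h1 : m = i <;> by_cases h2 : m = k <;> by_cases h3 : m = j <;>
    simp_all [Ne.symm hji, Ne.symm hjk]

-- `σ_k s_{ik} = σ_{ik} σ_k` and friends.
lemma neg_sw_k {i k : Fin r} (hik : i ≠ k) (f : Pol r) :
    negA k (swA i k f) = sswA i k (negA k f) := by
  refine comp_apply_eq (fun m => ?_) f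
  by_cases h1 : m = i <;> by_cases h2 : m = k <;>
    simp_all [Equiv.swap_apply_def, Ne.symm hik]

lemma neg_ssw_k {i k : Fin r} (hik : i ≠ k) (f : Pol r) :
    negA k (sswA i k f) = swA i k (negA k f) := by
  refine comp_apply_eq (fun m => ?_) f
  by_cases h1 : m = i <;> by_cases h2 : m = k <;>
    simp_all [Equiv.swap_apply_def, Ne.symm hik]

lemma neg_sw_i {i k : Fin r} (hik : i ≠ k) (f : Pol r) :
    negA i (swA i k f) = sswA i k (negA i f) := by
  rw [sw_symm, ssw_symm]
  exact neg_sw_k (Ne.symm hik) f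

lemma neg_ssw_i {i k : Fin r} (hik : i ≠ k) (f : Pol r) :
    negA i (sswA i k f) = swA i k (negA i f) := by
  rw [sw_symm, ssw_symm]
  exact neg_ssw_k (Ne.symm hik) f

-- swaps versus the other generators
lemma sw_neg (a b m : Fin r) (f : Pol r) :
    swA a b (negA m f) = negA (Equiv.swap a b m) (swA a b f) := by
  refine comp_apply_eq (fun k => ?_) f
  by_cases h : k = m
  · subst h; simp
  · have : Equiv.swap a b k ≠ Equiv.swap a b m := fun hc => h ((Equiv.swap a b).injective hc)
    simp [h, this]

lemma sw_sw (a b i m : Fin r) (f : Pol r) :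
    swA a b (swA i m f) =
      swA (Equiv.swap a b i) (Equiv.swap a b m) (swA a b f) := by
  refine comp_apply_eq (fun k => ?_) f
  simp [Equiv.swap_apply_apply]

lemma sw_ssw (a b i m : Fin r) (f : Pol r) :
    swA a b (sswA i m f) =
      sswA (Equiv.swap a b i) (Equiv.swap a b m) (swA a b f) := by
  refine comp_apply_eq (fun k => ?_) f
  have hinj := (Equiv.swap a b).injective
  by_cases h1 : k = i
  · subst h1; simp
  · by_cases h2 : k = m
    · subst h2; simp [fun hc => h1 (hinj hc), h1]
    · simp [h1, h2, fun hc => h1 (hinj hc), fun hc => h2 (hinj hc)]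

-- factorization σ_{ab} = s_{ab} ∘ σ_a ∘ σ_b
lemma ssw_factor (a b : Fin r) (hab : a ≠ b) (f : Pol r) :
    sswA a b f = swA a b (negA a (negA b f)) := by
  have : sswA a b = (swA a b).comp ((negA a).comp (negA b)) := by
    apply MvPolynomial.algHom_ext
    intro k
    by_cases h1 : k = a <;> by_cases h2 : k = b <;>
      simp_all [Equiv.swap_apply_def, Ne.symm hab]
  rw [this]; rfl

end DunklAux


namespace DunklAux

variable {r : ℕ}

-- partial derivatives versus the reflections
lemma pd_sw (a b k : Fin r) (f : Pol r) :
    pderiv (Equiv.swap a b k) (swA a b f) = swA a b (pderiv k f) :=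
  pderiv_rename (Equiv.swap a b).injective k f

lemma pd_neg (j k : Fin r) (f : Pol r) :
    pderiv k (negA j f) = (if k = j then (-1:ℂ) else 1) • negA j (pderiv k f) := by
  induction f using MvPolynomial.induction_on with
  | C c' => simp [negA]
  | add p q hp hq => simp only [map_add, hp, hq, smul_add]
  | mul_X p n ih =>
      rw [map_mul, pderiv_mul, ih, pderiv_mul, map_add, map_mul, smul_add]
      congr 1
      · rw [smul_mul_assoc]
      · by_cases hn : n = k
        · subst hn
          by_cases hkj : n = j <;> simp [hkj, smul_smul]
        · have h1 : pderiv k (X n) = (0 : Pol r) := by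
            rw [pderiv_X]; exact Pi.single_eq_of_ne hn 1
          have h2 : pderiv k (negA j (X n)) = (0 : Pol r) := by
            rw [negA_X]
            split_ifs with h
            · subst h
              rw [map_neg]
              have : pderiv k (X n : Pol r) = 0 := by
                rw [pderiv_X]; exact Pi.single_eq_of_ne hn 1
              rw [this, neg_zero]
            · exact h1
          rw [h1, mul_zero, map_zero, smul_zero, h2, mul_zero]

lemma pd_neg_self (j : Fin r) (f : Pol r) :
    pderiv j (negA j f) = -(negA j (pderiv j f)) := by
  rw [pd_neg]; simp

lemma pd_neg_ne {j k : Fin r} (h : k ≠ j) (f : Pol r) :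
    pderiv k (negA j f) = negA j (pderiv k f) := by
  rw [pd_neg]; simp [h]

-- cancellation lemmas
lemma cancelX (j : Fin r) {f g : Pol r} (h : X j * f = X j * g) : f = g :=
  mul_left_cancel₀ (X_ne_zero j) h

lemma Xsub_ne {i j : Fin r} (h : i ≠ j) : (X j - X i : Pol r) ≠ 0 :=
  sub_ne_zero.mpr fun hc => h (X_injective hc).symm

lemma Xadd_ne {i j : Fin r} (h : i ≠ j) : (X j + X i : Pol r) ≠ 0 := by
  intro hc
  have h2 := congrArg (coeff (Finsupp.single j 1)) hc
  classical
  rw [coeff_add, coeff_X' (R := ℂ), coeff_X' (R := ℂ), coeff_zero] at h2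
  rw [if_pos rfl, if_neg (by
    rw [Finsupp.single_left_inj one_ne_zero]; exact h)] at h2
  norm_num at h2

lemma cancelXsub {i j : Fin r} (hij : i ≠ j) {f g : Pol r}
    (h : (X j - X i) * f = (X j - X i) * g) : f = g :=
  mul_left_cancel₀ (Xsub_ne hij) h

lemma cancelXadd {i j : Fin r} (hij : i ≠ j) {f g : Pol r}
    (h : (X j + X i) * f = (X j + X i) * g) : f = g :=
  mul_left_cancel₀ (Xadd_ne hij) h

section Quot

variable {q0 : Fin r → Module.End ℂ (Pol r)} {qs qσ : Fin r → Fin r → Module.End ℂ (Pol r)}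

lemma q0_spec (hq0 : QuotLong q0) (j : Fin r) (f : Pol r) :
    X j * q0 j f = f - negA j f := hq0 j f

lemma qs_spec (hqs : QuotS qs) {i j : Fin r} (h : i ≠ j) (f : Pol r) :
    (X j - X i) * qs i j f = f - swA i j f := hqs i j h f

lemma qσ_spec (hqσ : QuotSig qσ) {i j : Fin r} (h : i ≠ j) (f : Pol r) :
    (X j + X i) * qσ i j f = f - sswA i j f := hqσ i j h f

-- values at 1
lemma q0_one (hq0 : QuotLong q0) (j : Fin r) : q0 j 1 = 0 := by
  apply cancelX j
  rw [q0_spec hq0, map_one, mul_zero, sub_self]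

lemma qs_one (hqs : QuotS qs) {i j : Fin r} (h : i ≠ j) : qs i j 1 = 0 := by
  apply cancelXsub h
  rw [qs_spec hqs h, map_one, mul_zero, sub_self]

lemma qσ_one (hqσ : QuotSig qσ) {i j : Fin r} (h : i ≠ j) : qσ i j 1 = 0 := by
  apply cancelXadd h
  rw [qσ_spec hqσ h, map_one, mul_zero, sub_self]

-- antisymmetry
lemma qs_antisymm (hqs : QuotS qs) {i j : Fin r} (h : i ≠ j) (f : Pol r) :
    qs j i f = -(qs i j f) := by
  apply cancelXsub (Ne.symm h)
  rw [qs_spec hqs (Ne.symm h), mul_neg]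
  rw [show (X i - X j : Pol r) = -(X j - X i) by ring, neg_mul, neg_neg,
    qs_spec hqs h, sw_symm]

lemma qσ_symm (hqσ : QuotSig qσ) {i j : Fin r} (h : i ≠ j) (f : Pol r) :
    qσ j i f = qσ i j f := by
  apply cancelXadd (Ne.symm h)
  rw [qσ_spec hqσ (Ne.symm h), show (X i + X j : Pol r) = X j + X i by ring,
    qσ_spec hqσ h, ssw_symm]

end Quot

end DunklAux


namespace DunklAux

variable {r : ℕ}
variable {q0 : Fin r → Module.End ℂ (Pol r)} {qs qσ : Fin r → Fin r → Module.End ℂ (Pol r)}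

-- q-operators versus sign changes
lemma q0_neg_self (hq0 : QuotLong q0) (j : Fin r) (f : Pol r) :
    q0 j (negA j f) = -(negA j (q0 j f)) := by
  apply cancelX j
  have h2 := congrArg (negA j) (q0_spec hq0 j f)
  rw [map_mul, map_sub, negA_X, if_pos rfl, negA_negA] at h2
  rw [q0_spec hq0 j (negA j f), negA_negA, mul_neg, ← neg_mul, h2]

lemma q0_neg_ne (hq0 : QuotLong q0) {j k : Fin r} (h : k ≠ j) (f : Pol r) :
    q0 k (negA j f) = negA j (q0 k f) := by
  apply cancelX k
  have h2 := congrArg (negA j) (q0_spec hq0 k f)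
  rw [map_mul, map_sub, negA_X, if_neg h] at h2
  rw [q0_spec hq0 k (negA j f), neg_comm k j, ← h2]

lemma qs_neg_comm (hqs : QuotS qs) {i k j : Fin r} (hik : i ≠ k) (hji : j ≠ i)
    (hjk : j ≠ k) (f : Pol r) : qs i k (negA j f) = negA j (qs i k f) := by
  apply cancelXsub hik
  have h2 := congrArg (negA j) (qs_spec hqs hik f)
  rw [map_mul, map_sub, map_sub, negA_X, negA_X, if_neg (Ne.symm hjk),
    if_neg (Ne.symm hji), neg_sw_comm hji hjk] at h2
  rw [qs_spec hqs hik (negA j f), h2]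

lemma qσ_neg_comm (hqσ : QuotSig qσ) {i k j : Fin r} (hik : i ≠ k) (hji : j ≠ i)
    (hjk : j ≠ k) (f : Pol r) : qσ i k (negA j f) = negA j (qσ i k f) := by
  apply cancelXadd hik
  have h2 := congrArg (negA j) (qσ_spec hqσ hik f)
  rw [map_mul, map_add, map_sub, negA_X, negA_X, if_neg (Ne.symm hjk),
    if_neg (Ne.symm hji), neg_ssw_comm hji hjk] at h2
  rw [qσ_spec hqσ hik (negA j f), h2]

lemma qs_neg_k (hqs : QuotS qs) (hqσ : QuotSig qσ) {i k : Fin r} (hik : i ≠ k)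
    (f : Pol r) : qs i k (negA k f) = -(negA k (qσ i k f)) := by
  apply cancelXsub hik
  have h2 := congrArg (negA k) (qσ_spec hqσ hik f)
  rw [map_mul, map_add, map_sub, negA_X, negA_X, if_pos rfl, if_neg hik,
    neg_ssw_k hik] at h2
  rw [qs_spec hqs hik (negA k f), mul_neg,
    show -((X k - X i) * negA k (qσ i k f)) = (-X k + X i) * negA k (qσ i k f) by ring, h2]

lemma qσ_neg_k (hqs : QuotS qs) (hqσ : QuotSig qσ) {i k : Fin r} (hik : i ≠ k)
    (f : Pol r) : qσ i k (negA k f) = -(negA k (qs i k f)) := by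
  apply cancelXadd hik
  have h2 := congrArg (negA k) (qs_spec hqs hik f)
  rw [map_mul, map_sub, map_sub, negA_X, negA_X, if_pos rfl, if_neg hik,
    neg_sw_k hik] at h2
  rw [qσ_spec hqσ hik (negA k f), mul_neg,
    show -((X k + X i) * negA k (qs i k f)) = (-X k - X i) * negA k (qs i k f) by ring, h2]

lemma qs_neg_i (hqs : QuotS qs) (hqσ : QuotSig qσ) {i k : Fin r} (hik : i ≠ k)
    (f : Pol r) : qs i k (negA i f) = negA i (qσ i k f) := by
  apply cancelXsub hik
  have h2 := congrArg (negA i) (qσ_spec hqσ hik f)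
  rw [map_mul, map_add, map_sub, negA_X, negA_X, if_pos rfl, if_neg (Ne.symm hik),
    neg_ssw_i hik] at h2
  rw [qs_spec hqs hik (negA i f),
    show (X k - X i : Pol r) = X k + -X i by ring, h2]

lemma qσ_neg_i (hqs : QuotS qs) (hqσ : QuotSig qσ) {i k : Fin r} (hik : i ≠ k)
    (f : Pol r) : qσ i k (negA i f) = negA i (qs i k f) := by
  apply cancelXadd hik
  have h2 := congrArg (negA i) (qs_spec hqs hik f)
  rw [map_mul, map_sub, map_sub, negA_X, negA_X, if_pos rfl, if_neg (Ne.symm hik),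
    neg_sw_i hik] at h2
  rw [qσ_spec hqσ hik (negA i f),
    show (X k + X i : Pol r) = X k - -X i by ring, h2]

-- q-operators versus swaps
lemma q0_sw (hq0 : QuotLong q0) (a b m : Fin r) (f : Pol r) :
    q0 (Equiv.swap a b m) (swA a b f) = swA a b (q0 m f) := by
  apply cancelX (Equiv.swap a b m)
  have h2 := congrArg (swA a b) (q0_spec hq0 m f)
  rw [map_mul, map_sub, swA_X, sw_neg] at h2
  rw [q0_spec hq0 _ (swA a b f), h2]

lemma qs_sw (hqs : QuotS qs) {a b i m : Fin r} (him : i ≠ m) (f : Pol r) :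
    qs (Equiv.swap a b i) (Equiv.swap a b m) (swA a b f) = swA a b (qs i m f) := by
  have hne : Equiv.swap a b i ≠ Equiv.swap a b m := (Equiv.swap a b).injective.ne him
  apply cancelXsub hne
  have h2 := congrArg (swA a b) (qs_spec hqs him f)
  rw [map_mul, map_sub, map_sub, swA_X, swA_X, sw_sw] at h2
  rw [qs_spec hqs hne (swA a b f), h2]

lemma qσ_sw (hqσ : QuotSig qσ) {a b i m : Fin r} (him : i ≠ m) (f : Pol r) :
    qσ (Equiv.swap a b i) (Equiv.swap a b m) (swA a b f) = swA a b (qσ i m f) := by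
  have hne : Equiv.swap a b i ≠ Equiv.swap a b m := (Equiv.swap a b).injective.ne him
  apply cancelXadd hne
  have h2 := congrArg (swA a b) (qσ_spec hqσ him f)
  rw [map_mul, map_add, map_sub, swA_X, swA_X, sw_ssw] at h2
  rw [qσ_spec hqσ hne (swA a b f), h2]

-- commutators with multiplication by a variable
lemma q0_mulX_ne (hq0 : QuotLong q0) {j k : Fin r} (h : k ≠ j) (f : Pol r) :
    q0 k (X j * f) = X j * q0 k f := by
  apply cancelX k
  rw [q0_spec hq0 k (X j * f), map_mul, negA_X, if_neg (Ne.symm h), ← mul_sub,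
    ← q0_spec hq0 k f]
  ring

lemma q0_mulX_self (hq0 : QuotLong q0) (j : Fin r) (f : Pol r) :
    q0 j (X j * f) = f + negA j f := by
  apply cancelX j
  rw [q0_spec hq0 j (X j * f), map_mul, negA_X, if_pos rfl]
  ring

lemma qs_mulX_ne (hqs : QuotS qs) {i k j : Fin r} (hik : i ≠ k) (hji : j ≠ i)
    (hjk : j ≠ k) (f : Pol r) : qs i k (X j * f) = X j * qs i k f := by
  apply cancelXsub hik
  rw [qs_spec hqs hik (X j * f), map_mul, swA_X,
    Equiv.swap_apply_of_ne_of_ne hji hjk, ← mul_sub, ← qs_spec hqs hik f]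
  ring

lemma qσ_mulX_ne (hqσ : QuotSig qσ) {i k j : Fin r} (hik : i ≠ k) (hji : j ≠ i)
    (hjk : j ≠ k) (f : Pol r) : qσ i k (X j * f) = X j * qσ i k f := by
  apply cancelXadd hik
  rw [qσ_spec hqσ hik (X j * f), map_mul, sswA_X, if_neg hji, if_neg hjk,
    ← mul_sub, ← qσ_spec hqσ hik f]
  ring

lemma qs_mulX_k (hqs : QuotS qs) {i k : Fin r} (hik : i ≠ k) (f : Pol r) :
    qs i k (X k * f) = X k * qs i k f + swA i k f := by
  apply cancelXsub hik
  rw [qs_spec hqs hik (X k * f), map_mul, swA_X, Equiv.swap_apply_right, mul_add,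
    mul_left_comm (X k - X i) (X k), qs_spec hqs hik f]
  ring

lemma qs_mulX_i (hqs : QuotS qs) {i k : Fin r} (hik : i ≠ k) (f : Pol r) :
    qs i k (X i * f) = X i * qs i k f - swA i k f := by
  apply cancelXsub hik
  rw [qs_spec hqs hik (X i * f), map_mul, swA_X, Equiv.swap_apply_left, mul_sub,
    mul_left_comm (X k - X i) (X i), qs_spec hqs hik f]
  ring

lemma qσ_mulX_k (hqσ : QuotSig qσ) {i k : Fin r} (hik : i ≠ k) (f : Pol r) :
    qσ i k (X k * f) = X k * qσ i k f + sswA i k f := by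
  apply cancelXadd hik
  rw [qσ_spec hqσ hik (X k * f), map_mul, sswA_X, if_neg (Ne.symm hik), if_pos rfl, mul_add,
    mul_left_comm (X k + X i) (X k), qσ_spec hqσ hik f]
  ring

lemma qσ_mulX_i (hqσ : QuotSig qσ) {i k : Fin r} (hik : i ≠ k) (f : Pol r) :
    qσ i k (X i * f) = X i * qσ i k f + sswA i k f := by
  apply cancelXadd hik
  rw [qσ_spec hqσ hik (X i * f), map_mul, sswA_X, if_pos rfl, mul_add,
    mul_left_comm (X k + X i) (X i), qσ_spec hqσ hik f]
  ring

end DunklAux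


namespace DunklAux

variable {r : ℕ}


lemma mulNeg {r : ℕ} (A B : Module.End ℂ (Pol r)) : A * -B = -(A * B) :=
  LinearMap.ext fun f => by simp [Module.End.mul_apply]

lemma negMul {r : ℕ} (A B : Module.End ℂ (Pol r)) : (-A) * B = -(A * B) :=
  LinearMap.ext fun f => by simp [Module.End.mul_apply]

section OpRel


variable (ι a : ℂ) {q0 : Fin r → Module.End ℂ (Pol r)}
  {qs qσ : Fin r → Fin r → Module.End ℂ (Pol r)}
variable (hq0 : QuotLong q0) (hqs : QuotS qs) (hqσ : QuotSig qσ)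

local notation "D" => dunklC ι a q0 qs qσ

lemma dunklC_apply (m : Fin r) (f : Pol r) :
    D m f = pderiv m f + ((ι - 1) / 2) • q0 m f
      + (a / 2) • ∑ i ∈ Finset.univ.erase m, (qs i m f + qσ i m f) := by
  simp [dunklC, pd, LinearMap.add_apply, LinearMap.smul_apply, LinearMap.sum_apply]

include hq0 hqs hqσ

lemma negOp_D_ne {m j : Fin r} (h : m ≠ j) :
    negOp j * D m = D m * negOp j := by
  apply LinearMap.ext; intro f
  rw [Module.End.mul_apply, Module.End.mul_apply, negOp_apply, negOp_apply,
    dunklC_apply, dunklC_apply]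
  rw [map_add, map_add, map_smul, map_smul, map_sum]
  congr 1
  · congr 1
    · exact (pd_neg_ne h f).symm
    · congr 1
      exact (q0_neg_ne hq0 h f).symm
  · congr 1
    refine Finset.sum_congr rfl (fun i hi => ?_)
    have him : i ≠ m := (Finset.mem_erase.mp hi).1
    rcases eq_or_ne i j with rfl | hij
    · rw [map_add, qs_neg_i hqs hqσ him f, qσ_neg_i hqs hqσ him f, add_comm]
    · rw [map_add, qs_neg_comm hqs him (Ne.symm hij) (Ne.symm h) f,
        qσ_neg_comm hqσ him (Ne.symm hij) (Ne.symm h) f]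

lemma negOp_D_self (j : Fin r) :
    negOp j * D j = -(D j * negOp j) := by
  apply LinearMap.ext; intro f
  rw [Module.End.mul_apply, LinearMap.neg_apply, Module.End.mul_apply, negOp_apply,
    negOp_apply, dunklC_apply, dunklC_apply]
  have hsum : ∑ i ∈ Finset.univ.erase j, (qs i j (negA j f) + qσ i j (negA j f))
      = -∑ i ∈ Finset.univ.erase j, (negA j (qs i j f) + negA j (qσ i j f)) := by
    rw [← Finset.sum_neg_distrib]
    refine Finset.sum_congr rfl (fun i hi => ?_)
    have him : i ≠ j := (Finset.mem_erase.mp hi).1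
    rw [qs_neg_k hqs hqσ him f, qσ_neg_k hqs hqσ him f]
    ring
  have hsum2 : negA j (∑ i ∈ Finset.univ.erase j, (qs i j f + qσ i j f))
      = ∑ i ∈ Finset.univ.erase j, (negA j (qs i j f) + negA j (qσ i j f)) := by
    rw [map_sum]
    exact Finset.sum_congr rfl (fun i _ => map_add _ _ _)
  rw [pd_neg_self, q0_neg_self hq0 j f, hsum, map_add, map_add, map_smul,
    map_smul, hsum2, smul_neg, smul_neg]
  exact (show ∀ x y z : Pol r, x + y + z = -(-x + -y + -z) from fun x y z => by
    ring) _ _ _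

lemma swOp_D (u v m : Fin r) :
    swOp u v * D m = D (Equiv.swap u v m) * swOp u v := by
  apply LinearMap.ext; intro f
  rw [Module.End.mul_apply, Module.End.mul_apply, swOp_apply, swOp_apply,
    dunklC_apply, dunklC_apply]
  rw [map_add, map_add, map_smul, map_smul, map_sum]
  have himg : Finset.univ.erase (Equiv.swap u v m)
      = Finset.image (Equiv.swap u v) (Finset.univ.erase m) := by
    ext x
    constructor
    · intro hx
      rw [Finset.mem_erase] at hx
      refine Finset.mem_image.mpr ⟨Equiv.swap u v x, ?_, by simp⟩
      rw [Finset.mem_erase]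
      exact ⟨fun hc => hx.1 (by rw [← hc]; simp), Finset.mem_univ _⟩
    · intro hx
      rcases Finset.mem_image.mp hx with ⟨y, hy, rfl⟩
      rw [Finset.mem_erase] at hy ⊢
      exact ⟨(Equiv.swap u v).injective.ne hy.1, Finset.mem_univ _⟩
  congr 1
  · congr 1
    · exact (pd_sw u v m f).symm
    · congr 1
      exact (q0_sw hq0 u v m f).symm
  · congr 1
    rw [himg, Finset.sum_image (fun x _ y _ h => (Equiv.swap u v).injective h)]
    refine Finset.sum_congr rfl (fun i hi => ?_)
    have him : i ≠ m := (Finset.mem_erase.mp hi).1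
    rw [map_add, qs_sw hqs him f, qσ_sw hqσ him f]

lemma swOp_D_ne {u v m : Fin r} (hmu : m ≠ u) (hmv : m ≠ v) :
    swOp u v * D m = D m * swOp u v := by
  have := swOp_D ι a hq0 hqs hqσ u v m
  rwa [Equiv.swap_apply_of_ne_of_ne hmu hmv] at this

lemma swOp_D_v (u v : Fin r) : swOp u v * D v = D u * swOp u v := by
  have := swOp_D ι a hq0 hqs hqσ u v v
  rwa [Equiv.swap_apply_right] at this

lemma swOp_D_u (u v : Fin r) : swOp u v * D u = D v * swOp u v := by
  have := swOp_D ι a hq0 hqs hqσ u v u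
  rwa [Equiv.swap_apply_left] at this

omit hq0 hqs hqσ in
lemma sswOp_factor {u v : Fin r} (huv : u ≠ v) :
    sswOp u v = swOp u v * negOp u * negOp v := by
  apply LinearMap.ext; intro f
  rw [Module.End.mul_apply, Module.End.mul_apply, sswOp_apply, swOp_apply,
    negOp_apply, negOp_apply]
  exact ssw_factor u v huv f

lemma sswOp_D_ne {u v m : Fin r} (huv : u ≠ v) (hmu : m ≠ u) (hmv : m ≠ v) :
    sswOp u v * D m = D m * sswOp u v := by
  rw [sswOp_factor huv]
  simp only [mul_assoc]
  rw [negOp_D_ne ι a hq0 hqs hqσ hmv, ← mul_assoc (negOp u),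
    negOp_D_ne ι a hq0 hqs hqσ hmu]
  simp only [mul_assoc]
  rw [← mul_assoc (swOp u v), swOp_D_ne ι a hq0 hqs hqσ hmu hmv]
  simp only [mul_assoc] <;> rfl

lemma sswOp_D_v {u v : Fin r} (huv : u ≠ v) :
    sswOp u v * D v = -(D u * sswOp u v) := by
  rw [sswOp_factor huv]
  simp only [mul_assoc]
  rw [negOp_D_self ι a hq0 hqs hqσ v, mulNeg, mulNeg, neg_inj,
    ← mul_assoc (negOp u), negOp_D_ne ι a hq0 hqs hqσ (Ne.symm huv)]
  simp only [mul_assoc]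
  rw [← mul_assoc (swOp u v), swOp_D_v ι a hq0 hqs hqσ u v]
  simp only [mul_assoc] <;> rfl

lemma sswOp_D_u {u v : Fin r} (huv : u ≠ v) :
    sswOp u v * D u = -(D v * sswOp u v) := by
  rw [sswOp_factor huv]
  simp only [mul_assoc]
  rw [negOp_D_ne ι a hq0 hqs hqσ huv, ← mul_assoc (negOp u),
    negOp_D_self ι a hq0 hqs hqσ u]
  rw [negMul, mulNeg, neg_inj]
  simp only [mul_assoc]
  rw [← mul_assoc (swOp u v), swOp_D_u ι a hq0 hqs hqσ u v]
  simp only [mul_assoc] <;> rfl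

-- symmetry of the operators
omit hq0 hqs hqσ

lemma swOp_symm (u v : Fin r) : swOp u v = swOp v u :=
  LinearMap.ext fun f => sw_symm u v f

lemma sswOp_symm (u v : Fin r) : sswOp u v = sswOp v u :=
  LinearMap.ext fun f => ssw_symm u v f

end OpRel

end DunklAux


namespace DunklAux

variable {r : ℕ}

lemma mulOp_apply (p f : Pol r) : mulOp p f = p * f := rfl

section OpRel2

variable (ι a : ℂ) {q0 : Fin r → Module.End ℂ (Pol r)}
  {qs qσ : Fin r → Fin r → Module.End ℂ (Pol r)}
variable (hq0 : QuotLong q0) (hqs : QuotS qs) (hqσ : QuotSig qσ)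

local notation "D" => dunklC ι a q0 qs qσ

include hq0 hqs hqσ

/-- Commutator of `D k` with multiplication by `X j`, for `k ≠ j`. -/
lemma D_mulX_ne {k j : Fin r} (h : k ≠ j) :
    D k * mulOp (X j) = mulOp (X j) * D k + (a / 2) • (sswOp j k - swOp j k) := by
  apply LinearMap.ext; intro f
  rw [Module.End.mul_apply, LinearMap.add_apply, Module.End.mul_apply,
    LinearMap.smul_apply, LinearMap.sub_apply, mulOp_apply, mulOp_apply,
    sswOp_apply, swOp_apply, dunklC_apply, dunklC_apply]
  have hpd : pderiv k (X j * f) = X j * pderiv k f := by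
    rw [pderiv_mul]
    have h0 : pderiv k (X j : Pol r) = 0 := by
      rw [pderiv_X]; exact Pi.single_eq_of_ne (Ne.symm h) 1
    rw [h0, zero_mul, zero_add]
  have hsum : ∑ i ∈ Finset.univ.erase k, (qs i k (X j * f) + qσ i k (X j * f))
      = ∑ i ∈ Finset.univ.erase k, (X j * (qs i k f + qσ i k f)
        + (if i = j then sswA j k f - swA j k f else 0)) := by
    refine Finset.sum_congr rfl (fun i hi => ?_)
    have hik : i ≠ k := (Finset.mem_erase.mp hi).1
    rcases eq_or_ne i j with rfl | hij
    · rw [if_pos rfl, qs_mulX_i hqs hik f, qσ_mulX_i hqσ hik f]; ring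
    · rw [if_neg hij, qs_mulX_ne hqs hik (Ne.symm hij) (Ne.symm h) f,
        qσ_mulX_ne hqσ hik (Ne.symm hij) (Ne.symm h) f]; ring
  rw [hpd, q0_mulX_ne hq0 h f, hsum, Finset.sum_add_distrib,
    Finset.sum_ite_eq' (Finset.univ.erase k) j
      (fun _ => sswA j k f - swA j k f),
    if_pos (Finset.mem_erase.mpr ⟨Ne.symm h, Finset.mem_univ j⟩),
    ← Finset.mul_sum]
  rw [mul_add, mul_add, mul_smul_comm, mul_smul_comm]
  module

/-- Commutator of `D j` with multiplication by `X j`. -/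
lemma D_mulX_self (j : Fin r) :
    D j * mulOp (X j) = mulOp (X j) * D j + 1 + (ι - 1) • negOp j
      + (a / 2) • ∑ i ∈ Finset.univ.erase j, (sswOp i j + swOp i j) := by
  apply LinearMap.ext; intro f
  rw [LinearMap.add_apply, LinearMap.add_apply, LinearMap.add_apply,
    Module.End.mul_apply, Module.End.mul_apply, LinearMap.smul_apply,
    LinearMap.smul_apply, LinearMap.sum_apply, Module.End.one_apply,
    mulOp_apply, mulOp_apply, negOp_apply, dunklC_apply, dunklC_apply]
  have hpd : pderiv j (X j * f) = f + X j * pderiv j f := by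
    rw [pderiv_mul, pderiv_X_self, one_mul]
  have hsum : ∑ i ∈ Finset.univ.erase j, (qs i j (X j * f) + qσ i j (X j * f))
      = ∑ i ∈ Finset.univ.erase j, (X j * (qs i j f + qσ i j f)
        + (sswA i j f + swA i j f)) := by
    refine Finset.sum_congr rfl (fun i hi => ?_)
    have hij : i ≠ j := (Finset.mem_erase.mp hi).1
    rw [qs_mulX_k hqs hij f, qσ_mulX_k hqσ hij f]; ring
  have happ : ∑ i ∈ Finset.univ.erase j, ((sswOp i j + swOp i j) f)
      = ∑ i ∈ Finset.univ.erase j, (sswA i j f + swA i j f) :=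
    Finset.sum_congr rfl (fun i _ => by
      rw [LinearMap.add_apply, sswOp_apply, swOp_apply])
  rw [hpd, q0_mulX_self hq0 j f, hsum, Finset.sum_add_distrib, ← Finset.mul_sum,
    happ]
  have hspec : X j * q0 j f = f - negA j f := q0_spec hq0 j f
  rw [mul_add, mul_add, mul_smul_comm, mul_smul_comm, hspec]
  module

/-- values at 1 -/
lemma D_one (m : Fin r) : D m (1 : Pol r) = 0 := by
  rw [dunklC_apply]
  have h1 : pderiv m (1 : Pol r) = 0 := by simp
  have h2 : q0 m (1 : Pol r) = 0 := q0_one hq0 m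
  have h3 : ∑ i ∈ Finset.univ.erase m, (qs i m (1 : Pol r) + qσ i m (1 : Pol r)) = 0 := by
    refine Finset.sum_eq_zero (fun i hi => ?_)
    have him : i ≠ m := (Finset.mem_erase.mp hi).1
    rw [qs_one hqs him, qσ_one hqσ him, add_zero]
  rw [h1, h2, h3, smul_zero, smul_zero, add_zero, add_zero]

/-- The bracket identity needed for commutativity. -/
lemma bracket_eq {j k : Fin r} (hjk : j ≠ k) (i : Fin r) :
    D j * (D k * mulOp (X i) - mulOp (X i) * D k)
      - (D k * mulOp (X i) - mulOp (X i) * D k) * D j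
    = D k * (D j * mulOp (X i) - mulOp (X i) * D j)
      - (D j * mulOp (X i) - mulOp (X i) * D j) * D k := by
  rcases eq_or_ne i j with rfl | hij
  · -- i = j
    have hBk : D k * mulOp (X i) - mulOp (X i) * D k
        = (a / 2) • (sswOp i k - swOp i k) := by
      rw [D_mulX_ne ι a hq0 hqs hqσ (Ne.symm hjk)]; abel
    have hBj : D i * mulOp (X i) - mulOp (X i) * D i
        = 1 + (ι - 1) • negOp i
          + (a / 2) • ∑ m ∈ Finset.univ.erase i, (sswOp m i + swOp m i) := by
      rw [D_mulX_self ι a hq0 hqs hqσ i]; abel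
    rw [hBk, hBj]
    have hneg : negOp i * D k = D k * negOp i :=
      negOp_D_ne ι a hq0 hqs hqσ (Ne.symm hjk)
    have e1 : sswOp i k * D i = -(D k * sswOp i k) := sswOp_D_u ι a hq0 hqs hqσ hjk
    have e2 : sswOp i k * D k = -(D i * sswOp i k) := sswOp_D_v ι a hq0 hqs hqσ hjk
    have e3 : swOp i k * D i = D k * swOp i k := swOp_D_u ι a hq0 hqs hqσ i k
    have e4 : swOp i k * D k = D i * swOp i k := swOp_D_v ι a hq0 hqs hqσ i k
    have hsum0 : D k * (∑ m ∈ Finset.univ.erase i, (sswOp m i + swOp m i))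
        - (∑ m ∈ Finset.univ.erase i, (sswOp m i + swOp m i)) * D k
        = D k * sswOp i k + D k * swOp i k - sswOp i k * D k - swOp i k * D k := by
      rw [Finset.mul_sum, Finset.sum_mul, ← Finset.sum_sub_distrib]
      rw [show ∑ m ∈ Finset.univ.erase i,
          (D k * (sswOp m i + swOp m i) - (sswOp m i + swOp m i) * D k)
        = ∑ m ∈ Finset.univ.erase i, (if m = k then
            D k * sswOp i k + D k * swOp i k - sswOp i k * D k - swOp i k * D k
          else 0) from Finset.sum_congr rfl (fun m hm => ?_)]
      · rw [Finset.sum_ite_eq' (Finset.univ.erase i) k _,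
          if_pos (Finset.mem_erase.mpr ⟨Ne.symm hjk, Finset.mem_univ k⟩)]
      · have hmi : m ≠ i := (Finset.mem_erase.mp hm).1
        rcases eq_or_ne m k with rfl | hmk
        · rw [if_pos rfl, sswOp_symm m i, swOp_symm m i, mul_add, add_mul]
          abel
        · rw [if_neg hmk, mul_add, add_mul,
            ← sswOp_D_ne ι a hq0 hqs hqσ hmi (Ne.symm hmk) (Ne.symm hjk),
            ← swOp_D_ne ι a hq0 hqs hqσ (Ne.symm hmk) (Ne.symm hjk)]
          abel
    have hsum2 : (∑ m ∈ Finset.univ.erase i, (sswOp m i + swOp m i)) * D k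
        = D k * (∑ m ∈ Finset.univ.erase i, (sswOp m i + swOp m i))
          - (D k * sswOp i k + D k * swOp i k - sswOp i k * D k - swOp i k * D k) := by
      rw [← hsum0]; abel
    simp only [mul_add, add_mul, mul_sub, sub_mul, mul_one, one_mul,
      mul_smul_comm, smul_mul_assoc, smul_sub, smul_add]
    rw [hsum2, e1, e2, e3, e4, hneg]
    simp only [mul_add, add_mul, mul_sub, sub_mul, mul_smul_comm,
      smul_mul_assoc, smul_sub, smul_add, smul_neg, mul_neg, neg_mul]
    module
  · rcases eq_or_ne i k with rfl | hik
    · -- i = k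
      have hBk : D i * mulOp (X i) - mulOp (X i) * D i
          = 1 + (ι - 1) • negOp i
            + (a / 2) • ∑ m ∈ Finset.univ.erase i, (sswOp m i + swOp m i) := by
        rw [D_mulX_self ι a hq0 hqs hqσ i]; abel
      have hBj : D j * mulOp (X i) - mulOp (X i) * D j
          = (a / 2) • (sswOp i j - swOp i j) := by
        rw [D_mulX_ne ι a hq0 hqs hqσ (Ne.symm hij)]; abel
      rw [hBk, hBj]
      have hneg : negOp i * D j = D j * negOp i :=
        negOp_D_ne ι a hq0 hqs hqσ hjk
      have e1 : sswOp i j * D i = -(D j * sswOp i j) :=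
        sswOp_D_u ι a hq0 hqs hqσ (Ne.symm hjk)
      have e2 : sswOp i j * D j = -(D i * sswOp i j) :=
        sswOp_D_v ι a hq0 hqs hqσ (Ne.symm hjk)
      have e3 : swOp i j * D i = D j * swOp i j := swOp_D_u ι a hq0 hqs hqσ i j
      have e4 : swOp i j * D j = D i * swOp i j := swOp_D_v ι a hq0 hqs hqσ i j
      have hsum0 : D j * (∑ m ∈ Finset.univ.erase i, (sswOp m i + swOp m i))
          - (∑ m ∈ Finset.univ.erase i, (sswOp m i + swOp m i)) * D j
          = D j * sswOp i j + D j * swOp i j - sswOp i j * D j - swOp i j * D j := by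
        rw [Finset.mul_sum, Finset.sum_mul, ← Finset.sum_sub_distrib]
        rw [show ∑ m ∈ Finset.univ.erase i,
            (D j * (sswOp m i + swOp m i) - (sswOp m i + swOp m i) * D j)
          = ∑ m ∈ Finset.univ.erase i, (if m = j then
              D j * sswOp i j + D j * swOp i j - sswOp i j * D j - swOp i j * D j
            else 0) from Finset.sum_congr rfl (fun m hm => ?_)]
        · rw [Finset.sum_ite_eq' (Finset.univ.erase i) j _,
            if_pos (Finset.mem_erase.mpr ⟨hjk, Finset.mem_univ j⟩)]
        · have hmi : m ≠ i := (Finset.mem_erase.mp hm).1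
          rcases eq_or_ne m j with rfl | hmj
          · rw [if_pos rfl, sswOp_symm m i, swOp_symm m i, mul_add, add_mul]
            abel
          · rw [if_neg hmj, mul_add, add_mul,
              ← sswOp_D_ne ι a hq0 hqs hqσ hmi (Ne.symm hmj) (Ne.symm hij),
              ← swOp_D_ne ι a hq0 hqs hqσ (Ne.symm hmj) (Ne.symm hij)]
            abel
      have hsum2 : (∑ m ∈ Finset.univ.erase i, (sswOp m i + swOp m i)) * D j
          = D j * (∑ m ∈ Finset.univ.erase i, (sswOp m i + swOp m i))
            - (D j * sswOp i j + D j * swOp i j - sswOp i j * D j - swOp i j * D j) := by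
        rw [← hsum0]; abel
      simp only [mul_add, add_mul, mul_sub, sub_mul, mul_one, one_mul,
        mul_smul_comm, smul_mul_assoc, smul_sub, smul_add]
      rw [hsum2, e1, e2, e3, e4, hneg]
      simp only [mul_add, add_mul, mul_sub, sub_mul, mul_smul_comm,
        smul_mul_assoc, smul_sub, smul_add, smul_neg, mul_neg, neg_mul]
      module
    · -- i ∉ {j, k}
      have hBk : D k * mulOp (X i) - mulOp (X i) * D k
          = (a / 2) • (sswOp i k - swOp i k) := by
        rw [D_mulX_ne ι a hq0 hqs hqσ (Ne.symm hik)]; abel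
      have hBj : D j * mulOp (X i) - mulOp (X i) * D j
          = (a / 2) • (sswOp i j - swOp i j) := by
        rw [D_mulX_ne ι a hq0 hqs hqσ (Ne.symm hij)]; abel
      rw [hBk, hBj]
      simp only [mul_sub, sub_mul, mul_smul_comm, smul_mul_assoc, smul_sub]
      rw [← sswOp_D_ne ι a hq0 hqs hqσ hik (Ne.symm hij) hjk,
        ← swOp_D_ne ι a hq0 hqs hqσ (Ne.symm hij) hjk,
        ← sswOp_D_ne ι a hq0 hqs hqσ hij (Ne.symm hik) (Ne.symm hjk),
        ← swOp_D_ne ι a hq0 hqs hqσ (Ne.symm hik) (Ne.symm hjk)]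
      module

end OpRel2

end DunklAux


namespace DunklAux

variable {r : ℕ}

section Comm

variable (ι a : ℂ) {q0 : Fin r → Module.End ℂ (Pol r)}
  {qs qσ : Fin r → Fin r → Module.End ℂ (Pol r)}
variable (hq0 : QuotLong q0) (hqs : QuotS qs) (hqσ : QuotSig qσ)

local notation "D" => dunklC ι a q0 qs qσ

include hq0 hqs hqσ

lemma comm_mulX {m n : Fin r} (hmn : m ≠ n) (i : Fin r) :
    (D m * D n - D n * D m) * mulOp (X i)
      = mulOp (X i) * (D m * D n - D n * D m) := by
  have key := bracket_eq ι a hq0 hqs hqσ hmn i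
  have expand : ∀ (A B M : Module.End ℂ (Pol r)),
      (A * B - B * A) * M - M * (A * B - B * A)
        = (A * (B * M - M * B) - (B * M - M * B) * A)
          - (B * (A * M - M * A) - (A * M - M * A) * B) := by
    intros A B M
    simp only [mul_sub, sub_mul, mul_assoc]
    abel
  have h0 : (D m * D n - D n * D m) * mulOp (X i)
      - mulOp (X i) * (D m * D n - D n * D m) = 0 := by
    rw [expand, key, sub_self]
  exact sub_eq_zero.mp h0

lemma D_commute (m n : Fin r) : Commute (D m) (D n) := by
  rcases eq_or_ne m n with rfl | hmn
  · exact Commute.refl _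
  · show D m * D n = D n * D m
    apply LinearMap.ext
    intro f
    induction f using MvPolynomial.induction_on with
    | C c =>
        have h1 : (C c : Pol r) = c • 1 := by rw [smul_eq_C_mul, mul_one]
        rw [h1, map_smul, map_smul]
        simp [Module.End.mul_apply, D_one ι a hq0 hqs hqσ]
    | add p q hp hq => rw [map_add, map_add, hp, hq]
    | mul_X p n' ih =>
        have hop := comm_mulX ι a hq0 hqs hqσ hmn n'
        have happ := LinearMap.congr_fun hop p
        simp only [Module.End.mul_apply, LinearMap.sub_apply, mulOp_apply,
          map_sub] at happ
        have ih' : D m (D n p) = D n (D m p) := by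
          have := ih
          simp only [Module.End.mul_apply] at this
          exact this
        rw [ih', sub_self] at happ <;> skip
        simp only [Module.End.mul_apply]
        rw [mul_comm p (X n')]
        exact sub_eq_zero.mp happ

end Comm

end DunklAux


namespace DunklAux

variable {r : ℕ}

/-- Product of Dunkl operators along a list. -/
def Lp (ι a : ℂ) (q0 : Fin r → Module.End ℂ (Pol r))
    (qs qσ : Fin r → Fin r → Module.End ℂ (Pol r)) (ℓ : List (Fin r)) :
    Module.End ℂ (Pol r) :=
  (ℓ.map (dunklC ι a q0 qs qσ)).prod

section Lists

variable (ι a : ℂ) {q0 : Fin r → Module.End ℂ (Pol r)}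
  {qs qσ : Fin r → Fin r → Module.End ℂ (Pol r)}
variable (hq0 : QuotLong q0) (hqs : QuotS qs) (hqσ : QuotSig qσ)

local notation "D" => dunklC ι a q0 qs qσ
local notation "P" => Lp ι a q0 qs qσ

lemma Lp_nil : P ([] : List (Fin r)) = 1 := rfl

lemma Lp_cons (k : Fin r) (ℓ : List (Fin r)) : P (k :: ℓ) = D k * P ℓ := by
  simp [Lp]

include hq0 hqs hqσ

lemma Lp_pairwise (ℓ : List (Fin r)) : (ℓ.map D).Pairwise Commute := by
  induction ℓ with
  | nil => simp
  | cons k t ihp =>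
      rw [List.map_cons, List.pairwise_cons]
      refine ⟨fun x hx => ?_, ihp⟩
      rcases List.mem_map.mp hx with ⟨m, _, rfl⟩
      exact D_commute ι a hq0 hqs hqσ k m

lemma Lp_perm {ℓ₁ ℓ₂ : List (Fin r)} (h : ℓ₁.Perm ℓ₂) : P ℓ₁ = P ℓ₂ :=
  (h.map D).prod_eq' (Lp_pairwise ι a hq0 hqs hqσ ℓ₁)

lemma Lp_push (g : Module.End ℂ (Pol r)) (τ : Fin r → Fin r) (ε : Fin r → ℂ)
    (hrel : ∀ m, D m * g = ε m • (g * D (τ m))) (ℓ : List (Fin r)) :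
    P ℓ * g = (ℓ.map ε).prod • (g * P (ℓ.map τ)) := by
  induction ℓ with
  | nil => simp [Lp]
  | cons k t ihp =>
      rw [Lp_cons ι a, mul_assoc, ihp, List.map_cons, List.prod_cons,
        List.map_cons, Lp_cons ι a]
      rw [mul_smul_comm, ← mul_assoc, hrel k, smul_mul_assoc, smul_smul,
        mul_assoc, mul_comm ((t.map ε).prod) (ε k)]

-- push relations for the individual generators
lemma push_neg (j m : Fin r) :
    D m * negOp j = (if m = j then (-1:ℂ) else 1) • (negOp j * D m) := by
  rcases eq_or_ne m j with rfl | h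
  · rw [if_pos rfl, negOp_D_self ι a hq0 hqs hqσ m]; module
  · rw [if_neg h, one_smul, negOp_D_ne ι a hq0 hqs hqσ h]

lemma push_sw (u v m : Fin r) :
    D m * swOp u v = (1:ℂ) • (swOp u v * D (Equiv.swap u v m)) := by
  rw [one_smul, swOp_D ι a hq0 hqs hqσ u v (Equiv.swap u v m),
    Equiv.swap_apply_self]

lemma push_ssw {u v : Fin r} (huv : u ≠ v) (m : Fin r) :
    D m * sswOp u v
      = (if m = u ∨ m = v then (-1:ℂ) else 1)
        • (sswOp u v * D (Equiv.swap u v m)) := by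
  rcases eq_or_ne m u with rfl | hmu
  · rw [if_pos (Or.inl rfl), Equiv.swap_apply_left,
      sswOp_D_v ι a hq0 hqs hqσ huv]
    module
  · rcases eq_or_ne m v with rfl | hmv
    · rw [if_pos (Or.inr rfl), Equiv.swap_apply_right,
        sswOp_D_u ι a hq0 hqs hqσ huv]
      module
    · rw [if_neg (by tauto), one_smul, Equiv.swap_apply_of_ne_of_ne hmu hmv,
        sswOp_D_ne ι a hq0 hqs hqσ huv hmu hmv]

lemma P_negOp (j : Fin r) :
    P (List.finRange r) * negOp j = -(negOp j * P (List.finRange r)) := by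
  rw [Lp_push ι a hq0 hqs hqσ (negOp j) id (fun m => if m = j then (-1:ℂ) else 1)
    (fun m => push_neg ι a hq0 hqs hqσ j m) (List.finRange r)]
  rw [List.map_id]
  have hprod : ((List.finRange r).map (fun m => if m = j then (-1:ℂ) else 1)).prod
      = -1 := by
    rw [← Fin.prod_univ_def, Finset.prod_ite_eq' Finset.univ j (fun _ => (-1:ℂ)),
      if_pos (Finset.mem_univ j)]
  rw [hprod]
  module

omit hq0 hqs hqσ in
lemma map_perm_finRange (τ : Equiv.Perm (Fin r)) :
    ((List.finRange r).map ⇑τ).Perm (List.finRange r) := by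
  rw [List.perm_ext_iff_of_nodup ((List.nodup_finRange r).map τ.injective)
    (List.nodup_finRange r)]
  intro x
  simp only [List.mem_map, List.mem_finRange, iff_true]
  exact ⟨τ.symm x, trivial, by simp⟩

lemma P_swOp (u v : Fin r) :
    P (List.finRange r) * swOp u v = swOp u v * P (List.finRange r) := by
  rw [Lp_push ι a hq0 hqs hqσ (swOp u v) (Equiv.swap u v) (fun _ => (1:ℂ))
    (fun m => push_sw ι a hq0 hqs hqσ u v m) (List.finRange r)]
  have hprod : ((List.finRange r).map (fun _ => (1:ℂ))).prod = 1 := by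
    simp
  rw [hprod, one_smul, Lp_perm ι a hq0 hqs hqσ (map_perm_finRange (Equiv.swap u v))]

lemma P_sswOp {u v : Fin r} (huv : u ≠ v) :
    P (List.finRange r) * sswOp u v = sswOp u v * P (List.finRange r) := by
  rw [Lp_push ι a hq0 hqs hqσ (sswOp u v) (Equiv.swap u v)
    (fun m => if m = u ∨ m = v then (-1:ℂ) else 1)
    (fun m => push_ssw ι a hq0 hqs hqσ huv m) (List.finRange r)]
  have hprod : ((List.finRange r).map
      (fun m => if m = u ∨ m = v then (-1:ℂ) else 1)).prod = 1 := by
    rw [← Fin.prod_univ_def]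
    have hsplit : ∀ m : Fin r, (if m = u ∨ m = v then (-1:ℂ) else 1)
        = (if m = u then (-1:ℂ) else 1) * (if m = v then (-1:ℂ) else 1) := by
      intro m
      by_cases h1 : m = u <;> by_cases h2 : m = v <;> simp_all
    rw [Finset.prod_congr rfl (fun m _ => hsplit m), Finset.prod_mul_distrib,
      Finset.prod_ite_eq' Finset.univ u (fun _ => (-1:ℂ)),
      Finset.prod_ite_eq' Finset.univ v (fun _ => (-1:ℂ))]
    simp
  rw [hprod, one_smul, Lp_perm ι a hq0 hqs hqσ (map_perm_finRange (Equiv.swap u v))]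

/-- The key commutation of a product of Dunkl operators (over a list avoiding `j`)
with multiplication by `X j`. -/
lemma KL1 (j : Fin r) :
    ∀ ℓ : List (Fin r), ℓ.Nodup → j ∉ ℓ →
      P ℓ * mulOp (X j) = mulOp (X j) * P ℓ
        + (a / 2) • (ℓ.map
            (fun k => P (ℓ.erase k) * (sswOp k j - swOp k j))).sum := by
  intro ℓ
  induction ℓ with
  | nil => simp [Lp]
  | cons k t ihp =>
      intro hnd hj
      obtain ⟨hkt, hndt⟩ := List.nodup_cons.mp hnd
      have hjk : j ≠ k := fun h => hj (h ▸ List.mem_cons_self)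
      have hjt : j ∉ t := fun h => hj (List.mem_cons_of_mem k h)
      rw [Lp_cons ι a, mul_assoc, ihp hndt hjt, mul_add, ← mul_assoc,
        D_mulX_ne ι a hq0 hqs hqσ (Ne.symm hjk)]
      have herase : ∀ m ∈ t, (k :: t).erase m = k :: t.erase m := by
        intro m hm
        have : m ≠ k := fun h => hkt (h ▸ hm)
        exact List.erase_cons_tail (by simp [this.symm])
      have hmap : ((k :: t).map
            (fun m => P ((k :: t).erase m) * (sswOp m j - swOp m j))).sum
          = P t * (sswOp k j - swOp k j)
            + (t.map (fun m => D k * (P (t.erase m) * (sswOp m j - swOp m j)))).sum := by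
        rw [List.map_cons, List.sum_cons, List.erase_cons_head]
        congr 1
        refine congrArg List.sum (List.map_congr_left (fun m hm => ?_))
        rw [herase m hm, Lp_cons ι a, mul_assoc]
      have hswap : (sswOp j k - swOp j k) * P t = P t * (sswOp k j - swOp k j) := by
        rw [sswOp_symm j k, swOp_symm j k]
        have hc : Commute (sswOp k j - swOp k j) (P t) := by
          refine Commute.sub_left ?_ ?_ <;>
            refine Commute.list_prod_right _ _ (fun x hx => ?_)
          · rcases List.mem_map.mp hx with ⟨m, hm, rfl⟩
            have hmk : m ≠ k := fun h => hkt (h ▸ hm)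
            have hmj : m ≠ j := fun h => hjt (h ▸ hm)
            exact sswOp_D_ne ι a hq0 hqs hqσ (Ne.symm hjk) hmk hmj
          · rcases List.mem_map.mp hx with ⟨m, hm, rfl⟩
            have hmk : m ≠ k := fun h => hkt (h ▸ hm)
            have hmj : m ≠ j := fun h => hjt (h ▸ hm)
            exact swOp_D_ne ι a hq0 hqs hqσ hmk hmj
        exact hc.eq
      rw [hmap, add_mul, smul_mul_assoc, hswap, mul_assoc, mul_smul_comm,
        ← List.sum_map_mul_left, smul_add]
      abel


end Lists

end DunklAux


namespace DunklAux

variable {r : ℕ}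

lemma listSumNeg {α : Type*} (l : List α) (f : α → Module.End ℂ (Pol r)) :
    (l.map (fun x => -(f x))).sum = -((l.map f).sum) := by
  induction l with
  | nil => simp
  | cons b t ih => simp [ih]; abel

section Final

variable (ι a : ℂ) {q0 : Fin r → Module.End ℂ (Pol r)}
  {qs qσ : Fin r → Fin r → Module.End ℂ (Pol r)}
variable (hq0 : QuotLong q0) (hqs : QuotS qs) (hqσ : QuotSig qσ)

local notation "D" => dunklC ι a q0 qs qσ
local notation "P" => Lp ι a q0 qs qσ

include hq0 hqs hqσ

lemma KL2 (j : Fin r) :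
    P (List.finRange r) * mulOp (X j)
      = mulOp (X j) * P (List.finRange r) + P ((List.finRange r).erase j)
        + (ι - 1) • (negOp j * P ((List.finRange r).erase j)) := by
  set ℓ := (List.finRange r).erase j with hℓ
  have hnd : ℓ.Nodup := (List.nodup_finRange r).erase j
  have hjl : j ∉ ℓ := (List.nodup_finRange r).not_mem_erase
  have hmem : ∀ m ∈ ℓ, m ≠ j := fun m hm h => hjl (h ▸ hm)
  have hperm : (List.finRange r).Perm (j :: ℓ) :=
    List.perm_cons_erase (List.mem_finRange j)
  have hP : P (List.finRange r) = D j * P ℓ := by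
    rw [Lp_perm ι a hq0 hqs hqσ hperm, Lp_cons ι a]
  rw [hP, mul_assoc, KL1 ι a hq0 hqs hqσ j ℓ hnd hjl]
  rw [mul_add, ← mul_assoc (D j), D_mulX_self ι a hq0 hqs hqσ j]
  have hterm : ∀ k ∈ ℓ, D j * (P (ℓ.erase k) * (sswOp k j - swOp k j))
      = -((sswOp k j + swOp k j) * P ℓ) := by
    intro k hk
    have hkj : k ≠ j := hmem k hk
    have hcomm : P (ℓ.erase k) * (sswOp k j - swOp k j)
        = (sswOp k j - swOp k j) * P (ℓ.erase k) := by
      have hc : Commute (sswOp k j - swOp k j) (P (ℓ.erase k)) := by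
        refine Commute.sub_left ?_ ?_ <;>
          refine Commute.list_prod_right _ _ (fun x hx => ?_)
        · rcases List.mem_map.mp hx with ⟨m, hm, rfl⟩
          have hmk : m ≠ k := (hnd.mem_erase_iff.mp hm).1
          have hmj : m ≠ j := hmem m (List.mem_of_mem_erase hm)
          exact sswOp_D_ne ι a hq0 hqs hqσ hkj hmk hmj
        · rcases List.mem_map.mp hx with ⟨m, hm, rfl⟩
          have hmk : m ≠ k := (hnd.mem_erase_iff.mp hm).1
          have hmj : m ≠ j := hmem m (List.mem_of_mem_erase hm)
          exact swOp_D_ne ι a hq0 hqs hqσ hmk hmj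
      exact hc.eq.symm
    have hDssw : D j * sswOp k j = -(sswOp k j * D k) := by
      rw [sswOp_D_u ι a hq0 hqs hqσ hkj, neg_neg]
    have hDsw : D j * swOp k j = swOp k j * D k :=
      (swOp_D_u ι a hq0 hqs hqσ k j).symm
    have hPe : D k * P (ℓ.erase k) = P ℓ := by
      rw [← Lp_cons ι a, Lp_perm ι a hq0 hqs hqσ (List.perm_cons_erase hk).symm]
    rw [hcomm, ← mul_assoc, mul_sub, hDssw, hDsw, sub_mul, negMul, mul_assoc,
      mul_assoc, hPe, add_mul]
    abel
  have hsumlist : (ℓ.map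
        (fun k => D j * (P (ℓ.erase k) * (sswOp k j - swOp k j)))).sum
      = -((ℓ.map (fun k => (sswOp k j + swOp k j) * P ℓ)).sum) := by
    rw [List.map_congr_left
      (fun k hk => (hterm k hk).trans rfl), listSumNeg]
  have htf : ℓ.toFinset = Finset.univ.erase j := by
    ext x
    rw [List.mem_toFinset, Finset.mem_erase, hℓ,
      (List.nodup_finRange r).mem_erase_iff]
    simp [List.mem_finRange]
  have hfin : ∑ i ∈ Finset.univ.erase j, (sswOp i j + swOp i j)
      = (ℓ.map (fun k => sswOp k j + swOp k j)).sum := by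
    rw [← htf, List.sum_toFinset _ hnd]
  rw [add_mul, add_mul, add_mul, one_mul, smul_mul_assoc, smul_mul_assoc,
    mul_smul_comm, ← List.sum_map_mul_left, hsumlist, hfin,
    List.sum_map_mul_right, mul_assoc]
  module

end Final

end DunklAux

/-- The shift formula for type-C Dunkl operators:
`(∏ₖ Dₖ)(Dⱼxⱼ - (a/2)∑_{i<j}(σ_{ij}+s_{ij})) =
 (Dⱼxⱼ - (a/2)∑_{i<j}(σ_{ij}+s_{ij}) + 1 - (ι-1)σ_j)(∏ₖ Dₖ)`. -/
theorem dunklC_shift_formula {r : ℕ} (ι a : ℂ) (q0 : Fin r → Module.End ℂ (Pol r))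
    (qs qσ : Fin r → Fin r → Module.End ℂ (Pol r))
    (hq0 : QuotLong q0) (hqs : QuotS qs) (hqσ : QuotSig qσ) (j : Fin r) :
    letI U : Module.End ℂ (Pol r) := dunklC ι a q0 qs qσ j * mulOp (X j) -
      (a / 2) • ∑ i ∈ Finset.univ.filter (fun i => i < j), (sswOp i j + swOp i j)
    opProd (dunklC ι a q0 qs qσ) * U
      = (U + 1 - (ι - 1) • negOp j) * opProd (dunklC ι a q0 qs qσ) := by
  classical
  show opProd (dunklC ι a q0 qs qσ) * (dunklC ι a q0 qs qσ j * mulOp (X j)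
      - (a / 2) • ∑ i ∈ Finset.univ.filter (fun i => i < j), (sswOp i j + swOp i j))
    = (dunklC ι a q0 qs qσ j * mulOp (X j)
      - (a / 2) • ∑ i ∈ Finset.univ.filter (fun i => i < j), (sswOp i j + swOp i j)
      + 1 - (ι - 1) • negOp j) * opProd (dunklC ι a q0 qs qσ)
  have hop : opProd (dunklC ι a q0 qs qσ)
      = DunklAux.Lp ι a q0 qs qσ (List.finRange r) := rfl
  rw [hop]
  have hPD : DunklAux.Lp ι a q0 qs qσ (List.finRange r) * dunklC ι a q0 qs qσ j
      = dunklC ι a q0 qs qσ j * DunklAux.Lp ι a q0 qs qσ (List.finRange r) := by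
    have hc : Commute (dunklC ι a q0 qs qσ j)
        (((List.finRange r).map (dunklC ι a q0 qs qσ)).prod) := by
      refine Commute.list_prod_right _ _ (fun x hx => ?_)
      rcases List.mem_map.mp hx with ⟨m, _, rfl⟩
      exact DunklAux.D_commute ι a hq0 hqs hqσ j m
    exact hc.eq.symm
  have hDQ : dunklC ι a q0 qs qσ j
        * DunklAux.Lp ι a q0 qs qσ ((List.finRange r).erase j)
      = DunklAux.Lp ι a q0 qs qσ (List.finRange r) := by
    rw [← DunklAux.Lp_cons ι a,
      ← DunklAux.Lp_perm ι a hq0 hqs hqσ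
        (List.perm_cons_erase (List.mem_finRange j))]
  have hPneg : DunklAux.Lp ι a q0 qs qσ (List.finRange r) * negOp j
      = -(negOp j * DunklAux.Lp ι a q0 qs qσ (List.finRange r)) :=
    DunklAux.P_negOp ι a hq0 hqs hqσ j
  have hPS : DunklAux.Lp ι a q0 qs qσ (List.finRange r)
        * (∑ i ∈ Finset.univ.filter (fun i => i < j), (sswOp i j + swOp i j))
      = (∑ i ∈ Finset.univ.filter (fun i => i < j), (sswOp i j + swOp i j))
        * DunklAux.Lp ι a q0 qs qσ (List.finRange r) := by
    rw [Finset.mul_sum, Finset.sum_mul]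
    refine Finset.sum_congr rfl (fun i hi => ?_)
    have hij : i ≠ j := ne_of_lt (Finset.mem_filter.mp hi).2
    rw [mul_add, add_mul, DunklAux.P_sswOp ι a hq0 hqs hqσ hij,
      DunklAux.P_swOp ι a hq0 hqs hqσ i j]
  have hjneg : dunklC ι a q0 qs qσ j * negOp j
      = -(negOp j * dunklC ι a q0 qs qσ j) := by
    rw [DunklAux.negOp_D_self ι a hq0 hqs hqσ j, neg_neg]
  rw [mul_sub, ← mul_assoc, hPD, mul_assoc, DunklAux.KL2 ι a hq0 hqs hqσ j,
    mul_add, mul_add, mul_smul_comm, ← mul_assoc (dunklC ι a q0 qs qσ j) (negOp j),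
    hjneg, DunklAux.negMul, mul_assoc (negOp j), hDQ,
    mul_smul_comm, hPS]
  rw [sub_mul, add_mul, sub_mul, one_mul, smul_mul_assoc, smul_mul_assoc,
    ← mul_assoc (dunklC ι a q0 qs qσ j)]
  module
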